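/- For any finite simple graph G, the conflict-free chromatic number with respect to closed neighborhoods is at most twice the conflict-free chromatic number with respect to pointed neighborhoods: χ_CF^cn(G) ≤ 2·χ_CF^pn(G). -/

import Mathlib

/-- A coloring `c` of the vertices of a graph `G` is a *pointed CF-coloring* if for every
vertex `v` with nonempty (pointed) neighborhood, some neighbor of `v` has a color different
from the colors of all other vertices in the neighborhood of `v`. -/
def PointedCF {V : Type*} (G : SimpleGraph V) {α : Type*} (c : V → α) : Prop :=
  ∀ v : V, (G.neighborSet v).Nonempty →
    ∃ u ∈ G.neighborSet v, ∀ w ∈ G.neighborSet v, w ≠ u → c w ≠ c u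

/-- A coloring `c` is a *closed CF-coloring* if for every vertex `v`, the closed neighborhood
`N[v] = {v} ∪ N(v)` contains a vertex whose color differs from all other vertices of `N[v]`. -/
def ClosedCF {V : Type*} (G : SimpleGraph V) {α : Type*} (c : V → α) : Prop :=
  ∀ v : V, ∃ u ∈ insert v (G.neighborSet v),
    ∀ w ∈ insert v (G.neighborSet v), w ≠ u → c w ≠ c u

/-- If `G` admits a pointed CF-coloring with `k` colors, then it admits a closed CF-coloring
with `2k` colors; i.e. `χ_CF^cn(G) ≤ 2·χ_CF^pn(G)`. -/
theorem closedCF_le_two_mul_pointedCF {V : Type*} (G : SimpleGraph V) (k : ℕ)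
    (h : ∃ c : V → Fin k, PointedCF G c) :
    ∃ c : V → Fin (2 * k), ClosedCF G c := by
  classical
  obtain ⟨c, hc⟩ := h
  set u : V → V := fun v =>
    if hv : (G.neighborSet v).Nonempty then (hc v hv).choose else v with hu
  have hu_mem : ∀ v, (G.neighborSet v).Nonempty → u v ∈ G.neighborSet v := by
    intro v hv
    simp only [hu, dif_pos hv]
    exact (hc v hv).choose_spec.1
  have hu_pt : ∀ v (hv : (G.neighborSet v).Nonempty),
      ∀ w ∈ G.neighborSet v, w ≠ u v → c w ≠ c (u v) := by
    intro v hv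
    simp only [hu, dif_pos hv]
    exact (hc v hv).choose_spec.2
  set D : V → Prop := fun v => (G.neighborSet v).Nonempty ∧ c v = c (u v) with hD
  have hkey : ∀ v, D v → D (u v) → u (u v) = v := by
    rintro v ⟨hv, hcv⟩ ⟨hx, hcx⟩
    by_contra hne
    have hvmem : v ∈ G.neighborSet (u v) := by
      have := hu_mem v hv
      rw [SimpleGraph.mem_neighborSet] at this ⊢
      exact this.symm
    exact hu_pt (u v) hx v hvmem (fun e => hne e.symm) (hcv.trans hcx)
  set P : V → Prop := fun v => D v ∧ (¬ D (u v) ∨ WellOrderingRel v (u v)) with hP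
  have hne_u : ∀ v, (G.neighborSet v).Nonempty → v ≠ u v := by
    intro v hv e
    have := hu_mem v hv
    rw [← e, SimpleGraph.mem_neighborSet] at this
    exact G.loopless.irrefl v this
  -- the flip holds for conflicting pairs
  have hflip : ∀ v, D v → (P v ↔ ¬ P (u v)) := by
    intro v hdv
    by_cases hdx : D (u v)
    · have huu : u (u v) = v := hkey v hdv hdx
      have hvx : v ≠ u v := hne_u v hdv.1
      rcases trichotomous_of WellOrderingRel v (u v) with hlt | heq | hgt
      · constructor
        · intro _ hPx
          rcases hPx.2 with h1 | h2
          · rw [huu] at h1; exact h1 hdv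
          · rw [huu] at h2; exact asymm hlt h2
        · intro _; exact ⟨hdv, Or.inr hlt⟩
      · exact absurd heq hvx
      · constructor
        · rintro ⟨_, h1 | h2⟩
          · exact absurd hdx h1
          · exact absurd hgt (asymm h2)
        · intro hnPx
          exact absurd ⟨hdx, Or.inr (by rwa [huu])⟩ hnPx
    · constructor
      · rintro _ ⟨hdx', _⟩; exact hdx hdx'
      · intro _; exact ⟨hdv, Or.inl hdx⟩
  set c' : V → Fin (2 * k) := fun v =>
    ⟨(c v).val + (if P v then k else 0), by
      have := (c v).isLt
      split <;> omega⟩ with hc'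
  refine ⟨c', ?_⟩
  have hinj : ∀ x y, c' x = c' y → c x = c y ∧ (P x ↔ P y) := by
    intro x y e
    have e' : (c x).val + (if P x then k else 0)
        = (c y).val + (if P y then k else 0) := congrArg Fin.val e
    have hx := (c x).isLt
    have hy := (c y).isLt
    by_cases px : P x <;> by_cases py : P y
    · rw [if_pos px, if_pos py] at e'
      exact ⟨Fin.ext (by omega), iff_of_true px py⟩
    · rw [if_pos px, if_neg py] at e'
      exfalso; omega
    · rw [if_neg px, if_pos py] at e'
      exfalso; omega
    · rw [if_neg px, if_neg py] at e'
      exact ⟨Fin.ext (by omega), iff_of_false px py⟩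
  intro v
  by_cases hv : (G.neighborSet v).Nonempty
  · by_cases hcd : c v = c (u v)
    · -- D v holds; v is its own witness
      have hdv : D v := ⟨hv, hcd⟩
      refine ⟨v, Set.mem_insert _ _, ?_⟩
      intro w hw hwv
      rcases Set.mem_insert_iff.mp hw with rfl | hwN
      · exact absurd rfl hwv
      · intro e
        obtain ⟨hce, hpe⟩ := hinj w v e
        by_cases hwx : w = u v
        · subst hwx
          have := hflip v hdv
          rw [hpe] at this
          exact iff_not_self this
        · exact hu_pt v hv w hwN hwx (hce.trans hcd)
    · -- u v is the witness
      refine ⟨u v, Set.mem_insert_of_mem _ (hu_mem v hv), ?_⟩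
      intro w hw hwx e
      obtain ⟨hce, _⟩ := hinj w (u v) e
      rcases Set.mem_insert_iff.mp hw with rfl | hwN
      · exact hcd hce
      · exact hu_pt v hv w hwN hwx hce
  · refine ⟨v, Set.mem_insert _ _, ?_⟩
    intro w hw hwv
    rcases Set.mem_insert_iff.mp hw with rfl | hwN
    · exact absurd rfl hwv
    · exact absurd ⟨w, hwN⟩ hv
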